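/- Let n > 5 and α, β ∈ S_n nonidentity. Then the product α^{S_n} β^{S_n} is never a single conjugacy class. -/

import Mathlib

/-- The conjugacy class of `a` in `G`. -/
def conjClass {G : Type*} [Group G] (a : G) : Set G := {x | IsConj a x}

/-- The product of two subsets of a group. -/
def setProd {G : Type*} [Group G] (C D : Set G) : Set G := {z | ∃ c ∈ C, ∃ d ∈ D, z = c * d}

/-- The number of conjugacy classes meeting a set `X`. -/
noncomputable def eta {G : Type*} [Group G] (X : Set G) : ℕ :=
  Nat.card {c : ConjClasses G // (c.carrier ∩ X).Nonempty}

open Equiv Finset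


variable {n : ℕ}

theorem Equiv.Perm.apply_inv_self {α : Type*} (f : Perm α) (x : α) : f (f⁻¹ x) = x :=
  f.apply_symm_apply x

theorem Equiv.Perm.inv_apply_self {α : Type*} (f : Perm α) (x : α) : f⁻¹ (f x) = x :=
  f.symm_apply_apply x

/-- number of fixed points of a permutation -/
def fixCount (g : Perm (Fin n)) : ℕ := (univ.filter (fun x => g x = x)).card

lemma fixCount_eq_of_isConj {g h : Perm (Fin n)} (hc : IsConj g h) :
    fixCount g = fixCount h := by
  obtain ⟨π, rfl⟩ := isConj_iff.mp hc
  unfold fixCount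
  apply Finset.card_bij' (fun x _ => π x) (fun x _ => π⁻¹ x)
  · intro a ha
    simp only [mem_filter, mem_univ, true_and] at ha ⊢
    simp [Perm.mul_apply, ha]
  · intro a ha
    simp only [mem_filter, mem_univ, true_and] at ha ⊢
    apply π.injective
    simp only [Perm.mul_apply] at ha
    rw [Perm.apply_inv_self]
    exact ha
  · intro a _; simp
  · intro a _; simp

lemma exists_perm_two (x w y z : Fin n) (hxw : x ≠ w) (hyz : y ≠ z) :
    ∃ π : Perm (Fin n), π x = y ∧ π w = z := by
  refine ⟨swap (swap x y w) z * swap x y, ?_, ?_⟩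
  · have h1 : swap x y w ≠ y := by
      intro h
      rcases eq_or_ne w x with rfl | hwx
      · simp at hxw
      · rcases eq_or_ne w y with rfl | hwy
        · rw [swap_apply_right] at h; exact hxw h
        · rw [swap_apply_of_ne_of_ne hwx hwy] at h; exact hwy h
    simp only [Perm.mul_apply, swap_apply_left]
    exact swap_apply_of_ne_of_ne h1.symm hyz
  · simp only [Perm.mul_apply]
    exact swap_apply_left _ _

lemma perm_ne_one_iff {β : Perm (Fin n)} (hβ : β ≠ 1) : ∃ x, β x ≠ x := by
  by_contra h
  push_neg at h
  exact hβ (Equiv.ext fun x => h x)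

lemma exists_conj_map {β : Perm (Fin n)} (hβ : β ≠ 1) (t u : Fin n) (htu : t ≠ u) :
    ∃ β', IsConj β β' ∧ β' t = u := by
  obtain ⟨x, hx⟩ := perm_ne_one_iff hβ
  obtain ⟨π, hπ1, hπ2⟩ := exists_perm_two x (β x) t u (Ne.symm hx) htu
  refine ⟨π * β * π⁻¹, isConj_iff.mpr ⟨π, rfl⟩, ?_⟩
  have : π⁻¹ t = x := by rw [← hπ1]; simp
  simp [Perm.mul_apply, this, hπ2]

lemma exists_fresh (hn : 5 ≤ n) (a b c d : Fin n) :
    ∃ z : Fin n, z ≠ a ∧ z ≠ b ∧ z ≠ c ∧ z ≠ d := by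
  by_contra h
  push_neg at h
  have hsub : (univ : Finset (Fin n)) ⊆ {a, b, c, d} := by
    intro z _
    by_cases h1 : z = a; · simp [h1]
    by_cases h2 : z = b; · simp [h2]
    by_cases h3 : z = c; · simp [h3]
    have := h z h1 h2 h3
    simp [this]
  have h1 := Finset.card_le_card hsub
  have h2 : ({a, b, c, d} : Finset (Fin n)).card ≤ 4 := by
    apply le_trans (Finset.card_insert_le _ _)
    apply Nat.succ_le_succ
    apply le_trans (Finset.card_insert_le _ _)
    apply Nat.succ_le_succ
    apply le_trans (Finset.card_insert_le _ _)
    apply Nat.succ_le_succ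
    simp
  simp only [Finset.card_univ, Fintype.card_fin] at h1
  omega
lemma exists_conj_map_avoid (hn : 5 ≤ n) {β : Perm (Fin n)} (hβ : β ≠ 1)
    (t u v q : Fin n) (htu : t ≠ u) (hvt : v ≠ t) (hvu : v ≠ u)
    (hqu : q ≠ u) (hqv : q ≠ v) :
    ∃ β', IsConj β β' ∧ β' t = u ∧ β' v ≠ q := by
  obtain ⟨β₀, hc, h0⟩ := exists_conj_map hβ t u htu
  by_cases hbv : β₀ v = q
  · by_cases hqt : q = t
    · -- q = t : β₀ v = t, β₀ t = u
      have hbv' : β₀ v = t := hqt ▸ hbv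
      obtain ⟨z, hza, hzb, hzc, -⟩ := exists_fresh hn v t u u
      refine ⟨swap v z * β₀ * (swap v z)⁻¹, hc.trans (isConj_iff.mpr ⟨swap v z, rfl⟩),
        ?_, ?_⟩
      · rw [swap_inv]
        simp only [Perm.mul_apply]
        rw [swap_apply_of_ne_of_ne hvt.symm (Ne.symm hzb), h0,
          swap_apply_of_ne_of_ne hvu.symm (Ne.symm hzc)]
      · rw [swap_inv]
        simp only [Perm.mul_apply]
        rw [swap_apply_left]
        intro hcon
        have h1 : β₀ z = swap v z q := by
          have := congrArg (swap v z) hcon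
          rwa [swap_apply_self] at this
        rw [← hqt] at hzb
        rw [swap_apply_of_ne_of_ne hqv (Ne.symm hzb)] at h1
        rw [hqt, ← hbv'] at h1
        exact hza (β₀.injective h1)
    · -- q ≠ t
      obtain ⟨z, hza, hzb, hzc, hzd⟩ := exists_fresh hn q t u v
      refine ⟨swap q z * β₀ * (swap q z)⁻¹, hc.trans (isConj_iff.mpr ⟨swap q z, rfl⟩),
        ?_, ?_⟩
      · rw [swap_inv]
        simp only [Perm.mul_apply]
        rw [swap_apply_of_ne_of_ne (Ne.symm hqt) (Ne.symm hzb), h0,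
          swap_apply_of_ne_of_ne hqu.symm (Ne.symm hzc)]
      · rw [swap_inv]
        simp only [Perm.mul_apply]
        rw [swap_apply_of_ne_of_ne hqv.symm (Ne.symm hzd), hbv, swap_apply_left]
        exact hza
  · exact ⟨β₀, hc, h0, hbv⟩

lemma key_lemma (hn : 5 ≤ n) (α β : Perm (Fin n)) (hβ : β ≠ 1)
    (u : Fin n) (hu : α u = u) (v : Fin n) (hv : α v ≠ v) (c : ℕ)
    (hconst : ∀ β', IsConj β β' → fixCount (α * β') = c) : False := by
  obtain ⟨t, ht⟩ : ∃ x, α v = x := ⟨_, rfl⟩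
  obtain ⟨q, hq⟩ : ∃ x, α⁻¹ v = x := ⟨_, rfl⟩
  have htv : t ≠ v := ht ▸ hv
  have huv : u ≠ v := by
    intro h
    apply hv
    rw [← h]
    exact hu
  have htu : t ≠ u := by
    intro h
    have h2 : α v = α u := by rw [hu, ht]; exact h
    exact huv (α.injective h2).symm
  have hqv : q ≠ v := by
    intro h
    apply hv
    have h2 : α q = v := by rw [← hq]; exact α.apply_inv_self v
    rw [h] at h2
    exact h2
  have hqu : q ≠ u := by
    intro h
    have h2 : α q = v := by rw [← hq]; exact α.apply_inv_self v
    rw [h, hu] at h2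
    exact huv h2
  obtain ⟨β', hcj, hβt, hβv⟩ :=
    exists_conj_map_avoid hn hβ t u v q htu (Ne.symm htv) (Ne.symm huv) hqu hqv
  set g := α * β' with hg
  set τ := swap u v with hτ
  set β'' := τ * β' * τ⁻¹ with hβ''
  have hcj'' : IsConj β β'' := hcj.trans (isConj_iff.mpr ⟨τ, rfl⟩)
  have key_comm : ∀ w, α (τ w) = swap u t (α w) := by
    intro w
    by_cases h1 : w = u
    · subst h1
      rw [show τ w = v from swap_apply_left _ _, hu, swap_apply_left, ht]
    · by_cases h2 : w = v
      · subst h2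
        rw [show τ w = u from swap_apply_right _ _, hu, ht, swap_apply_right]
      · rw [show τ w = w from swap_apply_of_ne_of_ne h1 h2]
        have hau : α w ≠ u := fun h => h1 (α.injective (h.trans hu.symm))
        have hat : α w ≠ t := fun h => h2 (α.injective (h.trans ht.symm))
        rw [swap_apply_of_ne_of_ne hau hat]
  have hfun : ∀ z, (α * β'') z = swap u t (g (τ z)) := by
    intro z
    have hτinv : τ⁻¹ = τ := by rw [hτ, swap_inv]
    calc (α * β'') z = α (τ (β' (τ⁻¹ z))) := by simp [hβ'', Perm.mul_apply]
    _ = swap u t (α (β' (τ⁻¹ z))) := key_comm _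
    _ = swap u t (g (τ z)) := by rw [hτinv]; simp [hg, Perm.mul_apply]
  have hgt : g t = u := by
    simp only [hg, Perm.mul_apply, hβt, hu]
  have hgu : g u ≠ u := by
    intro h
    simp only [hg, Perm.mul_apply] at h
    have h2 : β' u = u := α.injective (by rw [hu]; exact h)
    exact htu (β'.injective (hβt.trans h2.symm))
  have hgv : g v ≠ v := by
    intro h
    apply hβv
    simp only [hg, Perm.mul_apply] at h
    have h2 : α (β' v) = α q := by rw [h, ← hq, α.apply_inv_self]
    exact α.injective h2
  have hsub : (univ.filter (fun x => g x = x)) ⊆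
      (univ.filter (fun x => (α * β'') x = x)) := by
    intro z hz
    simp only [mem_filter, mem_univ, true_and] at hz ⊢
    have hzt : z ≠ t := by
      intro h
      rw [h, hgt] at hz
      exact htu hz.symm
    have hzu : z ≠ u := fun h => hgu (h ▸ hz)
    have hzv : z ≠ v := fun h => hgv (h ▸ hz)
    rw [hfun z, hτ, swap_apply_of_ne_of_ne hzu hzv, hz,
      swap_apply_of_ne_of_ne hzu hzt]
  have hth : (α * β'') t = t := by
    rw [hfun t, hτ, swap_apply_of_ne_of_ne htu htv, hgt, swap_apply_left]
  have hlt : fixCount g < fixCount (α * β'') := by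
    apply Finset.card_lt_card
    rw [Finset.ssubset_iff_of_subset hsub]
    refine ⟨t, ?_, ?_⟩
    · simp only [mem_filter, mem_univ, true_and]; exact hth
    · simp only [mem_filter, mem_univ, true_and]
      rw [hgt]
      exact htu.symm
  have e1 : fixCount g = c := hconst β' hcj
  have e2 : fixCount (α * β'') = c := hconst β'' hcj''
  rw [e1, e2] at hlt
  exact lt_irrefl c hlt
lemma card_fixing_two (a b : Fin n) (hab : a ≠ b) :
    (univ.filter (fun σ : Perm (Fin n) => σ a = a ∧ σ b = b)).card = Nat.factorial (n - 2) := by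
  have hcard : (univ.filter (fun σ : Perm (Fin n) => σ a = a ∧ σ b = b)).card
      = Fintype.card {σ : Perm (Fin n) // σ a = a ∧ σ b = b} :=
    (Fintype.card_subtype _).symm
  rw [hcard]
  have e1 : {σ : Perm (Fin n) // σ a = a ∧ σ b = b} ≃
      {f : Perm (Fin n) // ∀ x, ¬(x ≠ a ∧ x ≠ b) → f x = x} := by
    apply Equiv.subtypeEquivRight
    intro f
    constructor
    · rintro ⟨h1, h2⟩ x hx
      rcases not_and_or.mp hx with h | h
      · rw [not_not.mp h]; exact h1
      · rw [not_not.mp h]; exact h2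
    · intro h
      exact ⟨h a (by simp), h b (by simp)⟩
  have e2 := Equiv.Perm.subtypeEquivSubtypePerm (fun x : Fin n => x ≠ a ∧ x ≠ b)
  have hc2 : Fintype.card {σ : Perm (Fin n) // σ a = a ∧ σ b = b}
      = Fintype.card (Perm {x : Fin n // x ≠ a ∧ x ≠ b}) :=
    Fintype.card_congr (e1.trans e2.symm)
  rw [hc2, Fintype.card_perm]
  congr 1
  rw [Fintype.card_subtype]
  have hset : (univ.filter (fun x : Fin n => x ≠ a ∧ x ≠ b)) = univ \ {a, b} := by
    ext x
    simp [not_or]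
  rw [hset, Finset.card_sdiff_of_subset (Finset.subset_univ _), Finset.card_univ, Fintype.card_fin,
    Finset.card_pair hab]

lemma card_two_point (a b p q : Fin n) (hab : a ≠ b) (hpq : p ≠ q) :
    (univ.filter (fun σ : Perm (Fin n) => σ a = p ∧ σ b = q)).card = Nat.factorial (n - 2) := by
  obtain ⟨π, hπ1, hπ2⟩ := exists_perm_two p q a b hpq hab
  rw [← card_fixing_two a b hab]
  apply Finset.card_bij' (fun σ _ => π * σ) (fun σ _ => π⁻¹ * σ)
  · intro σ hσ
    simp only [mem_filter, mem_univ, true_and] at hσ ⊢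
    exact ⟨by rw [Perm.mul_apply, hσ.1, hπ1], by rw [Perm.mul_apply, hσ.2, hπ2]⟩
  · intro σ hσ
    simp only [mem_filter, mem_univ, true_and] at hσ ⊢
    constructor
    · rw [Perm.mul_apply, hσ.1, ← hπ1, Perm.inv_apply_self]
    · rw [Perm.mul_apply, hσ.2, ← hπ2, Perm.inv_apply_self]
  · intro σ _
    simp [← mul_assoc]
  · intro σ _
    simp [← mul_assoc]

lemma derangement_case (hn : 3 ≤ n) (α β : Perm (Fin n))
    (hα : ∀ x, α x ≠ x) (hβ : ∀ x, β x ≠ x) (c : ℕ)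
    (hconst : ∀ β', IsConj β β' → fixCount (α * β') = c) : False := by
  have hsum : ∑ σ : Perm (Fin n), fixCount (α * (σ * β * σ⁻¹)) = Nat.factorial n * c := by
    rw [Finset.sum_congr rfl (fun σ _ => hconst _ (isConj_iff.mpr ⟨σ, rfl⟩))]
    rw [Finset.sum_const, Finset.card_univ, Fintype.card_perm, Fintype.card_fin, smul_eq_mul]
  have hsum2 : ∑ σ : Perm (Fin n), fixCount (α * (σ * β * σ⁻¹)) = n * (n * Nat.factorial (n - 2)) := by
    have expand : ∀ σ : Perm (Fin n), fixCount (α * (σ * β * σ⁻¹)) =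
        ∑ x : Fin n, if (α * (σ * β * σ⁻¹)) x = x then 1 else 0 := by
      intro σ
      rw [fixCount, Finset.card_filter]
    rw [Finset.sum_congr rfl fun σ _ => expand σ, Finset.sum_comm]
    have inner : ∀ x : Fin n,
        (∑ σ : Perm (Fin n), if (α * (σ * β * σ⁻¹)) x = x then 1 else 0)
        = n * Nat.factorial (n - 2) := by
      intro x
      rw [← Finset.card_filter]
      have hb1 : (univ.filter (fun σ : Perm (Fin n) => (α * (σ * β * σ⁻¹)) x = x)).card
          = (univ.filter (fun σ : Perm (Fin n) => β (σ x) = σ (α⁻¹ x))).card := by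
        refine Finset.card_bij' (fun σ _ => σ⁻¹) (fun σ _ => σ⁻¹) ?_ ?_ ?_ ?_
        · intro σ hσ
          simp only [mem_filter, mem_univ, true_and] at hσ ⊢
          simp only [Perm.mul_apply] at hσ ⊢
          apply σ.injective
          rw [Perm.apply_inv_self]
          apply α.injective
          rw [Perm.apply_inv_self]
          exact hσ
        · intro σ hσ
          simp only [mem_filter, mem_univ, true_and] at hσ ⊢
          simp only [Perm.mul_apply, inv_inv]
          rw [hσ, Perm.inv_apply_self, Perm.apply_inv_self]
        · intro σ _; exact inv_inv σ
        · intro σ _; exact inv_inv σ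
      rw [hb1]
      rw [Finset.card_eq_sum_card_fiberwise
        (f := fun σ : Perm (Fin n) => σ x) (t := univ) (fun _ _ => mem_univ _)]
      have fib : ∀ y : Fin n,
          ((univ.filter (fun σ : Perm (Fin n) => β (σ x) = σ (α⁻¹ x))).filter
            (fun σ => σ x = y)).card = Nat.factorial (n - 2) := by
        intro y
        rw [Finset.filter_filter]
        have hfeq : (univ.filter (fun σ : Perm (Fin n) => β (σ x) = σ (α⁻¹ x) ∧ σ x = y))
            = (univ.filter (fun σ : Perm (Fin n) => σ x = y ∧ σ (α⁻¹ x) = β y)) := by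
          ext σ
          simp only [mem_filter, mem_univ, true_and]
          constructor
          · rintro ⟨h1, h2⟩
            exact ⟨h2, by rw [← h1, h2]⟩
          · rintro ⟨h1, h2⟩
            exact ⟨by rw [h1, h2], h1⟩
        rw [hfeq]
        apply card_two_point
        · intro h
          apply hα x
          nth_rewrite 1 [h]
          exact α.apply_inv_self x
        · exact (hβ y).symm
      rw [Finset.sum_congr rfl fun y _ => fib y, Finset.sum_const, Finset.card_univ,
        Fintype.card_fin, smul_eq_mul]
    rw [Finset.sum_congr rfl fun x _ => inner x, Finset.sum_const, Finset.card_univ,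
      Fintype.card_fin, smul_eq_mul]
  rw [hsum2] at hsum
  obtain ⟨m, rfl⟩ : ∃ m, n = m + 3 := ⟨n - 3, by omega⟩
  have hn2 : m + 3 - 2 = m + 1 := by omega
  have hf3 : Nat.factorial (m + 3) = (m + 3) * ((m + 2) * Nat.factorial (m + 1)) := by
    rw [show m + 3 = (m + 2) + 1 by ring, Nat.factorial_succ,
      show m + 2 = (m + 1) + 1 by ring, Nat.factorial_succ]
  rw [hn2, hf3] at hsum
  have hpos : 0 < (m + 3) * Nat.factorial (m + 1) := by positivity
  have h2 : ((m + 2) * c) * ((m + 3) * Nat.factorial (m + 1)) = (m + 3) * ((m + 3) * Nat.factorial (m + 1)) := by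
    calc ((m + 2) * c) * ((m + 3) * Nat.factorial (m + 1))
        = (m + 3) * ((m + 2) * Nat.factorial (m + 1)) * c := by ring
    _ = (m + 3) * ((m + 3) * Nat.factorial (m + 1)) := by rw [← hsum]
  have h3 : (m + 2) * c = m + 3 := Nat.eq_of_mul_eq_mul_right hpos h2
  rcases c with _ | _ | c
  · simp at h3
  · simp at h3
  · have h4 : (m + 2) * 2 ≤ (m + 2) * (c + 2) := Nat.mul_le_mul_left _ (by omega)
    rw [h3] at h4
    omega

theorem stmt16 (n : ℕ) (hn : 5 < n) (α β : Equiv.Perm (Fin n)) (hα : α ≠ 1) (hβ : β ≠ 1) :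
    ¬ ∃ γ : Equiv.Perm (Fin n), setProd (conjClass α) (conjClass β) = conjClass γ := by
  rintro ⟨γ, hγ⟩
  have hn5 : 5 ≤ n := by omega
  have hconst : ∀ α' β', IsConj α α' → IsConj β β' → fixCount (α' * β') = fixCount γ := by
    intro α' β' ha hb
    have hmem : α' * β' ∈ setProd (conjClass α) (conjClass β) := ⟨α', ha, β', hb, rfl⟩
    rw [hγ] at hmem
    exact (fixCount_eq_of_isConj hmem).symm
  by_cases hA : ∃ u, α u = u
  · obtain ⟨u, hu⟩ := hA
    obtain ⟨v, hv⟩ := perm_ne_one_iff hα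
    exact key_lemma hn5 α β hβ u hu v hv (fixCount γ)
      (fun β' hb => hconst α β' (IsConj.refl α) hb)
  · by_cases hB : ∃ u, β u = u
    · obtain ⟨u, hu⟩ := hB
      obtain ⟨v, hv⟩ := perm_ne_one_iff hβ
      apply key_lemma hn5 β α hα u hu v hv (fixCount γ)
      intro α' ha
      have h1 : IsConj (α' * β) (β * α') := isConj_iff.mpr ⟨β, by group⟩
      rw [← fixCount_eq_of_isConj h1]
      exact hconst α' β ha (IsConj.refl β)
    · push_neg at hA hB
      exact derangement_case (by omega) α β hA hB (fixCount γ)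
        (fun β' hb => hconst α β' (IsConj.refl α) hb)
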